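/- Let Γ = H *_K L be an amalgamated free product with K finite, and let R be a ring in which |K|·1 ≠ 0. Then there exists a right derivation f : Γ → R[Γ] with Ker(f) = H, namely the unique derivation with f(h) = 0 for h ∈ H and f(l) = Σ_{k∈K} k·(l − 1) for l ∈ L. -/

import Mathlib

open Monoid MonoidAlgebra

set_option linter.unusedSectionVars false

namespace AmalgamDerivationAux

variable {K : Type*} [Group K] [Fintype K]
    {G : Bool → Type*} [∀ i, Group (G i)] (φ : ∀ i, K →* G i)
    (R : Type*) [Ring R]

/-- The element `c = ∑ k ∈ K, k` of the group ring. -/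
noncomputable def cc : MonoidAlgebra R (PushoutI φ) :=
  ∑ k : K, MonoidAlgebra.single (PushoutI.base φ k) 1

lemma cc_mul_base (k : K) :
    cc φ R * MonoidAlgebra.single (PushoutI.base φ k) (1 : R) = cc φ R := by
  rw [cc, Finset.sum_mul]
  refine Fintype.sum_equiv (Equiv.mulRight k) _ _ (fun k' => ?_)
  simp [MonoidAlgebra.single_mul_single]

lemma cc_apply_mem (hφ : ∀ i, Function.Injective (φ i)) (k₀ : K) :
    (cc φ R).coeff (PushoutI.base φ k₀) = 1 := by
  classical
  rw [cc, MonoidAlgebra.coeff_sum, Finsupp.finset_sum_apply]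
  have h : ∀ k : K, (MonoidAlgebra.single (PushoutI.base φ k) (1 : R)).coeff (PushoutI.base φ k₀)
      = if k = k₀ then 1 else 0 := by
    intro k
    rw [MonoidAlgebra.coeff_single, Finsupp.single_apply]
    simp [(PushoutI.base_injective hφ).eq_iff]
  simp_rw [h]
  simp

lemma cc_apply_not_mem (v : PushoutI φ) (h : v ∉ (PushoutI.base φ).range) :
    (cc φ R).coeff v = 0 := by
  classical
  rw [cc, MonoidAlgebra.coeff_sum, Finsupp.finset_sum_apply]
  refine Finset.sum_eq_zero fun k _ => ?_
  rw [MonoidAlgebra.coeff_single, Finsupp.single_apply, if_neg]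
  intro hk
  exact h ⟨k, hk⟩


/-- The monoid `R[Γ] × Γ` with multiplication `(a,g)(b,h) = (a·h + b, gh)`,
so that monoid homs `Γ →* M` lifting the identity are exactly right derivations. -/
structure M (φ : ∀ i, K →* G i) (R : Type*) [Ring R] where
  fst : MonoidAlgebra R (PushoutI φ)
  snd : PushoutI φ

noncomputable instance : Mul (M φ R) :=
  ⟨fun x y => ⟨x.fst * MonoidAlgebra.single y.snd 1 + y.fst, x.snd * y.snd⟩⟩

noncomputable instance : One (M φ R) := ⟨⟨0, 1⟩⟩

@[simp] lemma M.mul_fst (x y : M φ R) :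
    (x * y).fst = x.fst * MonoidAlgebra.single y.snd 1 + y.fst := rfl

@[simp] lemma M.mul_snd (x y : M φ R) : (x * y).snd = x.snd * y.snd := rfl

@[simp] lemma M.one_fst : (1 : M φ R).fst = 0 := rfl

@[simp] lemma M.one_snd : (1 : M φ R).snd = 1 := rfl

@[ext] lemma M.ext {x y : M φ R} (h1 : x.fst = y.fst) (h2 : x.snd = y.snd) : x = y := by
  cases x; cases y; simp_all

noncomputable instance : Monoid (M φ R) where
  mul_assoc a b c := by
    ext
    · simp [add_mul, mul_assoc, MonoidAlgebra.single_mul_single, add_assoc]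
    · simp [mul_assoc]
  one_mul a := by
    ext <;> simp [← MonoidAlgebra.one_def]
  mul_one a := by
    ext <;> simp [← MonoidAlgebra.one_def]


/-- The hom `H → M` sending `x ↦ (0, x)`. -/
noncomputable def fH : G true →* M φ R where
  toFun x := ⟨0, PushoutI.of (φ := φ) true x⟩
  map_one' := by ext <;> simp
  map_mul' x y := by ext <;> simp

/-- The hom `L → M` sending `y ↦ (c(y-1), y)`. -/
noncomputable def fL : G false →* M φ R where
  toFun y := ⟨cc φ R * (MonoidAlgebra.single (PushoutI.of (φ := φ) false y) 1 - 1),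
    PushoutI.of (φ := φ) false y⟩
  map_one' := by ext <;> simp [← MonoidAlgebra.one_def]
  map_mul' x y := by
    refine M.ext φ R ?_ (map_mul (PushoutI.of (φ := φ) false) x y)
    show cc φ R * (MonoidAlgebra.single (PushoutI.of (φ := φ) false (x * y)) 1 - 1)
        = cc φ R * (MonoidAlgebra.single (PushoutI.of (φ := φ) false x) 1 - 1) *
            MonoidAlgebra.single (PushoutI.of (φ := φ) false y) 1
          + cc φ R * (MonoidAlgebra.single (PushoutI.of (φ := φ) false y) 1 - 1)
    simp only [map_mul, mul_sub, sub_mul, mul_one, one_mul, mul_assoc,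
      MonoidAlgebra.single_mul_single]
    abel

lemma compat : (fH φ R).comp (φ true) = (fL φ R).comp (φ false) := by
  refine MonoidHom.ext fun k => ?_
  have h2 : PushoutI.of (φ := φ) true (φ true k) = PushoutI.of (φ := φ) false (φ false k) := by
    rw [PushoutI.of_apply_eq_base φ true k, PushoutI.of_apply_eq_base φ false k]
  have h1 : (0 : MonoidAlgebra R (PushoutI φ))
      = cc φ R * (MonoidAlgebra.single (PushoutI.of (φ := φ) false (φ false k)) 1 - 1) := by
    rw [PushoutI.of_apply_eq_base φ false k, mul_sub, mul_one, cc_mul_base, sub_self]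
  exact congrArg₂ M.mk h1 h2

/-- The lifted hom `Γ →* M`. -/
noncomputable def liftF : PushoutI φ →* M φ R :=
  PushoutI.lift (fun i => Bool.rec (fL φ R) (fH φ R) i) ((fH φ R).comp (φ true))
    (by rintro (_|_); exacts [(compat φ R).symm, rfl])

/-- The second projection `M →* Γ`. -/
def sndHom : M φ R →* PushoutI φ where
  toFun x := x.snd
  map_one' := rfl
  map_mul' _ _ := rfl

lemma snd_liftF (g : PushoutI φ) : (liftF φ R g).snd = g := by
  have : (sndHom φ R).comp (liftF φ R) = MonoidHom.id _ := by
    apply PushoutI.hom_ext_nonempty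
    rintro (_|_) <;> ext x <;>
      simp [liftF, sndHom, PushoutI.lift_of, fL, fH]
  exact DFunLike.congr_fun this g

/-- The derivation. -/
noncomputable def ff (g : PushoutI φ) : MonoidAlgebra R (PushoutI φ) := (liftF φ R g).fst

lemma ff_mul (g h : PushoutI φ) :
    ff φ R (g * h) = ff φ R g * MonoidAlgebra.single h 1 + ff φ R h := by
  rw [ff, map_mul, M.mul_fst, snd_liftF]; rfl

lemma ff_of_true (x : G true) : ff φ R (PushoutI.of (φ := φ) true x) = 0 := by
  rw [ff, liftF, PushoutI.lift_of]; rfl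

lemma ff_of_false (y : G false) :
    ff φ R (PushoutI.of (φ := φ) false y)
      = cc φ R * (MonoidAlgebra.single (PushoutI.of (φ := φ) false y) 1 - 1) := by
  rw [ff, liftF, PushoutI.lift_of]; rfl

lemma ff_base (k : K) : ff φ R (PushoutI.base φ k) = 0 := by
  rw [← PushoutI.of_apply_eq_base φ true k, ff_of_true]

lemma ff_one : ff φ R 1 = 0 := by
  rw [← map_one (PushoutI.of (φ := φ) true), ff_of_true]


/-! ### Words -/

/-- Product of a list of letters in the pushout. -/
def P (l : List (Σ i, G i)) : PushoutI φ :=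
  (l.map fun a => PushoutI.of (φ := φ) a.1 a.2).prod

@[simp] lemma P_nil : P φ ([] : List (Σ i, G i)) = 1 := rfl

@[simp] lemma P_cons (a : Σ i, G i) (l : List (Σ i, G i)) :
    P φ (a :: l) = PushoutI.of (φ := φ) a.1 a.2 * P φ l := by
  simp [P]

lemma P_append (p q : List (Σ i, G i)) : P φ (p ++ q) = P φ p * P φ q := by
  simp [P]

/-- The value of the derivation on the product of a list, divided by `c`. -/
noncomputable def S : List (Σ i, G i) → MonoidAlgebra R (PushoutI φ)
  | [] => 0
  | a :: l => (if a.1 = false then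
      MonoidAlgebra.single (P φ (a :: l)) (1 : R) - MonoidAlgebra.single (P φ l) 1
      else 0) + S l

@[simp] lemma S_nil : S φ R ([] : List (Σ i, G i)) = 0 := rfl

lemma S_cons (a : Σ i, G i) (l : List (Σ i, G i)) :
    S φ R (a :: l) = (if a.1 = false then
      MonoidAlgebra.single (P φ (a :: l)) (1 : R) - MonoidAlgebra.single (P φ l) 1
      else 0) + S φ R l := rfl

lemma ff_P (l : List (Σ i, G i)) : ff φ R (P φ l) = cc φ R * S φ R l := by
  induction l with
  | nil => simp [ff_one]
  | cons a l ih =>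
    rcases a with ⟨i, x⟩
    rw [P_cons, ff_mul, ih, S_cons]
    cases i
    · show _ = cc φ R * ((MonoidAlgebra.single _ 1 - MonoidAlgebra.single _ 1) + _)
      rw [ff_of_false, mul_add, mul_sub, sub_mul, mul_assoc,
        MonoidAlgebra.single_mul_single, one_mul, mul_one, P_cons, mul_sub]
    · show _ = cc φ R * (0 + _)
      rw [ff_of_true, zero_mul, zero_add, zero_add]

lemma S_all_true (l : List (Σ i, G i)) (h : ∀ a ∈ l, a.1 = true) : S φ R l = 0 := by
  induction l with
  | nil => rfl
  | cons a l ih =>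
    rw [S_cons, if_neg, ih (fun b hb => h b (List.mem_cons_of_mem a hb)), add_zero]
    simp [h a (List.mem_cons_self)]


/-- A nonempty reduced alternating infix of a word does not multiply into the base group. -/
lemma P_not_base (hφ : ∀ i, Function.Injective (φ i))
    {l : List (Σ i, G i)} (hchain : l.Chain' fun a b => a.1 ≠ b.1)
    (hred : ∀ a ∈ l, a.2 ∉ (φ a.1).range)
    {p : List (Σ i, G i)} (hp : p ≠ []) (hinf : p <:+: l) :
    P φ p ∉ (PushoutI.base φ).range := by
  intro hmem
  have hsub : ∀ a ∈ p, a ∈ l := fun a ha => hinf.sublist.subset ha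
  set w : CoprodI.Word G :=
    ⟨p, fun a ha h1 => hred a (hsub a ha) (h1 ▸ one_mem _), hchain.infix hinf⟩ with hw
  have hwred : PushoutI.Reduced φ w := fun a ha => hred a (hsub a ha)
  have hprod : PushoutI.ofCoprodI (φ := φ) w.prod = P φ p := by
    simp [CoprodI.Word.prod, P, map_list_prod, List.map_map, Function.comp_def]
    rfl
  have := hwred.eq_empty_of_mem_range hφ (by rw [hprod]; exact hmem)
  rw [hw] at this
  exact hp (congrArg CoprodI.Word.toList this)

/-- Distinct suffixes of a reduced alternating word lie in distinct cosets of the base group. -/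
lemma suffix_coset_ne (hφ : ∀ i, Function.Injective (φ i))
    {l : List (Σ i, G i)} (hchain : l.Chain' fun a b => a.1 ≠ b.1)
    (hred : ∀ a ∈ l, a.2 ∉ (φ a.1).range)
    {s₁ s₂ : List (Σ i, G i)} (h₁ : s₁ <:+ l) (h₂ : s₂ <:+ l) (hne : s₁ ≠ s₂) :
    P φ s₁ * (P φ s₂)⁻¹ ∉ (PushoutI.base φ).range := by
  have key : ∀ s₁ s₂ : List (Σ i, G i), s₁ <:+ l → s₂ <:+ s₁ → s₁ ≠ s₂ →
      P φ s₁ * (P φ s₂)⁻¹ ∉ (PushoutI.base φ).range := by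
    intro s₁ s₂ h₁ h₂ hne
    obtain ⟨p, rfl⟩ := h₂
    have hp : p ≠ [] := by rintro rfl; simp at hne
    rw [P_append, mul_inv_cancel_right]
    obtain ⟨t, ht⟩ := h₁
    exact P_not_base φ hφ hchain hred hp ⟨t, s₂, by rw [List.append_assoc, ht]⟩
  rcases List.suffix_or_suffix_of_suffix h₁ h₂ with h | h
  · intro hmem
    refine key s₂ s₁ h₂ h (Ne.symm hne) ?_
    rw [show P φ s₂ * (P φ s₁)⁻¹ = (P φ s₁ * (P φ s₂)⁻¹)⁻¹ by group]
    exact inv_mem hmem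
  · exact key s₁ s₂ h₁ h hne


/-- The coefficient of the last `false`-suffix in `c · S l` is `1`. -/
lemma coeff_eq_one (hφ : ∀ i, Function.Injective (φ i))
    {l : List (Σ i, G i)} (hchain : l.Chain' fun a b => a.1 ≠ b.1)
    (hred : ∀ a ∈ l, a.2 ∉ (φ a.1).range)
    {y : G false} {r : List (Σ i, G i)}
    (hs : ((⟨false, y⟩ : Σ i, G i) :: r) <:+ l) (hr : ∀ a ∈ r, a.1 = true) :
    (cc φ R * S φ R l).coeff (P φ ((⟨false, y⟩ : Σ i, G i) :: r)) = 1 := by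
  induction l with
  | nil => simp [List.suffix_nil] at hs
  | cons a l ih =>
    rcases List.suffix_cons_iff.mp hs with h | h
    · obtain ⟨rfl, rfl⟩ : a = ⟨false, y⟩ ∧ l = r := by
        simpa [eq_comm] using h
      rw [S_cons, if_pos rfl, S_all_true φ R _ hr, add_zero, mul_sub,
        MonoidAlgebra.coeff_sub, Finsupp.sub_apply, MonoidAlgebra.coeff_mul_single_apply, MonoidAlgebra.coeff_mul_single_apply,
        mul_one, mul_one, mul_inv_cancel]
      rw [show (1 : PushoutI φ) = PushoutI.base φ 1 by rw [map_one], cc_apply_mem φ R hφ,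
        cc_apply_not_mem φ R _ (suffix_coset_ne φ hφ hchain hred (List.suffix_refl _)
          (List.suffix_cons _ _) (List.cons_ne_self _ _)), sub_zero]
    · have hlen : ∀ s : List (Σ i, G i), s <:+ l → s ≠ a :: l := by
        intro s hsl he
        have := hsl.length_le
        rw [he] at this
        simp at this
      have hchain' : l.Chain' fun a b => a.1 ≠ b.1 := hchain.tail
      have hred' : ∀ b ∈ l, b.2 ∉ (φ b.1).range :=
        fun b hb => hred b (List.mem_cons_of_mem a hb)
      rcases a with ⟨i, x⟩
      cases i
      · -- a is a false letter; since the suffix starts with a false letter it cannot be all of l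
        have hne_l : ((⟨false, y⟩ : Σ i, G i) :: r) ≠ l := by
          rintro rfl
          exact (List.isChain_cons_cons.mp hchain).1 rfl
        rw [S_cons, if_pos rfl, mul_add, mul_sub, MonoidAlgebra.coeff_add, Finsupp.add_apply, MonoidAlgebra.coeff_sub, Finsupp.sub_apply,
          MonoidAlgebra.coeff_mul_single_apply, MonoidAlgebra.coeff_mul_single_apply, mul_one, mul_one,
          cc_apply_not_mem φ R _ (suffix_coset_ne φ hφ hchain hred (h.trans (List.suffix_cons _ _))
            (List.suffix_refl _) (hlen _ h)),
          cc_apply_not_mem φ R _ (suffix_coset_ne φ hφ hchain' hred' h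
            (List.suffix_refl _) hne_l),
          sub_zero, zero_add]
        exact ih hchain' hred' h
      · rw [S_cons, if_neg (by simp), zero_add]
        exact ih hchain' hred' h


lemma ofCoprodI_word_prod (w : CoprodI.Word G) :
    PushoutI.ofCoprodI (φ := φ) w.prod = P φ w.toList := by
  simp [CoprodI.Word.prod, P, map_list_prod, List.map_map, Function.comp_def]

lemma mem_set_not_range (d : PushoutI.NormalWord.Transversal φ) {i : Bool} {g : G i}
    (hg : g ∈ d.set i) (hne : g ≠ 1) : g ∉ (φ i).range := by
  rintro ⟨k, rfl⟩
  have hinj := (d.compl i).1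
  have := hinj (a₁ := (⟨⟨φ i k, ⟨k, rfl⟩⟩, ⟨1, d.one_mem i⟩⟩ :
      ((φ i).range : Set (G i)) × (d.set i)))
    (a₂ := ⟨⟨1, one_mem _⟩, ⟨φ i k, hg⟩⟩) (by simp)
  apply hne
  have h2 := congrArg (fun x => (x.2 : G i)) this
  simpa using h2.symm

lemma exists_false_suffix (l : List (Σ i, G i)) (hl : ∃ a ∈ l, a.1 = false) :
    ∃ (y : G false) (r : List (Σ i, G i)),
      ((⟨false, y⟩ : Σ i, G i) :: r) <:+ l ∧ ∀ a ∈ r, a.1 = true := by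
  induction l with
  | nil => simp at hl
  | cons a l ih =>
    by_cases h : ∃ b ∈ l, b.1 = false
    · obtain ⟨y, r, hsuf, hr⟩ := ih h
      exact ⟨y, r, hsuf.trans (List.suffix_cons a l), hr⟩
    · push_neg at h
      have ha : a.1 = false := by
        obtain ⟨b, hb, hbf⟩ := hl
        rcases List.mem_cons.mp hb with rfl | hb'
        · exact hbf
        · exact absurd hbf (h b hb')
      rcases a with ⟨i, x⟩
      cases i
      · exact ⟨x, l, List.suffix_refl _, fun b hb => by
          have := h b hb; simpa using this⟩
      · exact absurd ha (by simp)

lemma ker_sub (hφ : ∀ i, Function.Injective (φ i)) (h1 : (1 : R) ≠ 0)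
    {g : PushoutI φ} (hg : ff φ R g = 0) :
    g ∈ (PushoutI.of (φ := φ) true).range := by
  classical
  obtain ⟨d⟩ := PushoutI.NormalWord.transversal_nonempty φ hφ
  set w := g • (default : PushoutI.NormalWord d) with hw
  have hprod : w.prod = g := by
    rw [hw]
    show ((g • PushoutI.NormalWord.empty).prod : PushoutI φ) = g
    rw [PushoutI.NormalWord.prod_smul, PushoutI.NormalWord.prod_empty, mul_one]
  have hgeq : g = PushoutI.base φ w.head * P φ w.toList := by
    rw [← hprod]
    show PushoutI.base φ w.head * PushoutI.ofCoprodI (w.toWord).prod = _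
    rw [ofCoprodI_word_prod]
  have hffl : ff φ R (P φ w.toList) = 0 := by
    have h0 : ff φ R g = ff φ R (P φ w.toList) := by
      rw [hgeq, ff_mul, ff_base, zero_mul, zero_add]
    rw [← h0]; exact hg
  have hchain : w.toList.Chain' fun a b => a.1 ≠ b.1 := w.chain_ne
  have hred : ∀ a ∈ w.toList, a.2 ∉ (φ a.1).range := by
    rintro ⟨i, x⟩ ha
    exact mem_set_not_range φ d (w.normalized i x ha) (w.ne_one ⟨i, x⟩ ha)
  by_cases hall : ∀ a ∈ w.toList, a.1 = true
  · rcases hl : w.toList with _ | ⟨⟨i, x⟩, _ | ⟨⟨j, z⟩, t⟩⟩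
    · rw [hl] at hgeq
      exact ⟨φ true w.head, by rw [PushoutI.of_apply_eq_base, hgeq, P_nil, mul_one]⟩
    · have hi : i = true := hall ⟨i, x⟩ (by rw [hl]; exact List.mem_cons_self)
      subst hi
      refine ⟨φ true w.head * x, ?_⟩
      rw [map_mul, PushoutI.of_apply_eq_base, hgeq, hl]
      simp
    · rw [hl] at hchain
      have h1' := (List.isChain_cons_cons.mp hchain).1
      have hi : i = true := hall ⟨i, x⟩ (by rw [hl]; exact List.mem_cons_self)
      have hj : j = true := hall ⟨j, z⟩ (by rw [hl]; simp)
      exact absurd (hi.trans hj.symm) h1'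
  · push_neg at hall
    obtain ⟨a, ha, haf⟩ := hall
    have haf' : a.1 = false := by simpa using haf
    obtain ⟨y, r, hsuf, hr⟩ := exists_false_suffix w.toList ⟨a, ha, haf'⟩
    have hone := coeff_eq_one φ R hφ hchain hred hsuf hr
    rw [← ff_P, hffl] at hone
    exact absurd hone.symm (by simpa using h1)

lemma unique_der (hφ : ∀ i, Function.Injective (φ i))
    (f' : PushoutI φ → MonoidAlgebra R (PushoutI φ))
    (hder : ∀ g h : PushoutI φ,
      f' (g * h) = f' g * MonoidAlgebra.single h (1 : R) + f' h)
    (htrue : ∀ x : G true, f' (PushoutI.of (φ := φ) true x) = 0)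
    (hfalse : ∀ y : G false, f' (PushoutI.of (φ := φ) false y) =
      cc φ R * (MonoidAlgebra.single (PushoutI.of (φ := φ) false y) (1 : R) - 1)) :
    ∀ g, f' g = ff φ R g := by
  intro g
  induction g using PushoutI.induction_on with
  | of i x =>
    cases i
    · rw [hfalse, ff_of_false]
    · rw [htrue, ff_of_true]
  | base k =>
    rw [← PushoutI.of_apply_eq_base φ true k, htrue, ff_of_true]
  | mul x y ihx ihy =>
    rw [hder, ff_mul, ihx, ihy]

end AmalgamDerivationAux

open AmalgamDerivationAux in
/-- Let `Γ = H *_K L` (pushout of two injective maps from a finite `K`, the factor `H`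
being indexed by `true` and `L` by `false`), and let `R` be a ring in which `|K| · 1 ≠ 0`.
Then there is a right derivation `f : Γ → R[Γ]` with kernel exactly `H`, namely the unique
derivation with `f(h) = 0` for `h ∈ H` and `f(l) = (Σ_{k ∈ K} k) · (l − 1)` for `l ∈ L`. -/
theorem amalgam_derivation_with_kernel_factor {K : Type*} [Group K] [Fintype K]
    {G : Bool → Type*} [∀ i, Group (G i)] (φ : ∀ i, K →* G i)
    (hφ : ∀ i, Function.Injective (φ i)) (R : Type*) [Ring R]
    (hK : (Fintype.card K : R) ≠ 0) :
    ∃ f : PushoutI φ → MonoidAlgebra R (PushoutI φ),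
      ((∀ g h : PushoutI φ,
          f (g * h) = f g * MonoidAlgebra.single h (1 : R) + f h) ∧
        (∀ x : G true, f (PushoutI.of (φ := φ) true x) = 0) ∧
        (∀ y : G false, f (PushoutI.of (φ := φ) false y) =
          (∑ k : K, (MonoidAlgebra.single (PushoutI.base φ k) (1 : R))) *
            (MonoidAlgebra.single (PushoutI.of (φ := φ) false y) (1 : R) - 1))) ∧
      {g : PushoutI φ | f g = 0} = ((PushoutI.of (φ := φ) true).range : Set (PushoutI φ)) ∧
      (∀ f' : PushoutI φ → MonoidAlgebra R (PushoutI φ),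
        ((∀ g h : PushoutI φ,
            f' (g * h) = f' g * MonoidAlgebra.single h (1 : R) + f' h) ∧
          (∀ x : G true, f' (PushoutI.of (φ := φ) true x) = 0) ∧
          (∀ y : G false, f' (PushoutI.of (φ := φ) false y) =
            (∑ k : K, (MonoidAlgebra.single (PushoutI.base φ k) (1 : R))) *
              (MonoidAlgebra.single (PushoutI.of (φ := φ) false y) (1 : R) - 1))) →
        f' = f) := by
  have h1 : (1 : R) ≠ 0 := by
    intro h
    exact hK (by rw [← mul_one ((Fintype.card K : R)), h, mul_zero])
  have hcc : (∑ k : K, (MonoidAlgebra.single (PushoutI.base φ k) (1 : R))) = cc φ R := rfl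
  refine ⟨ff φ R, ⟨ff_mul φ R, ff_of_true φ R, fun y => by rw [ff_of_false, hcc]⟩, ?_, ?_⟩
  · ext g
    simp only [Set.mem_setOf_eq, SetLike.mem_coe]
    constructor
    · exact fun h => ker_sub φ R hφ h1 h
    · rintro ⟨x, rfl⟩
      exact ff_of_true φ R x
  · rintro f' ⟨hder, htrue, hfalse⟩
    funext g
    exact unique_der φ R hφ f' hder htrue (by rw [← hcc]; exact hfalse) g
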